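/- Let 0 < β < 1, σ > 0, γ > 0, δ* > 0, ρ > 0, π ≥ 0. Suppose c, k, h*, u, λ, μ* : ℝ → ℝ are differentiable and strictly positive and satisfy for all t: (T1) λ = c^{−σ}; (T2) (h*·u/k)^β = (γ(1−β)/δ*)·(λ/μ*); (T3) k' = γ·k^β·(u·h*)^{1−β} − πk − c; (T4) (h*)' = δ*(1−u)h*; (T5) λ' = −λ·βγ·(h*·u/k)^{1−β} + λ(ρ+π); (T6) (μ*)' = μ*(ρ−δ*). Then for all t, u'(t)/u(t) = (δ*+π)(1−β)/β − c(t)/k(t) + δ*·u(t). -/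

import Mathlib

/-- In the transformed Lucas-Uzawa model, the first-order conditions (T1)-(T6)
imply the growth-rate equation u'/u = (δ*+π)(1-β)/β - c/k + δ*u. -/
theorem u_growth_rate (β σ γ δs ρ pi : ℝ)
    (hβ0 : 0 < β) (hβ1 : β < 1) (hσ : 0 < σ) (hγ : 0 < γ)
    (hδs : 0 < δs) (hρ : 0 < ρ) (hpi : 0 ≤ pi)
    (c k hs u lam mus : ℝ → ℝ)
    (hcd : Differentiable ℝ c) (hkd : Differentiable ℝ k)
    (hhd : Differentiable ℝ hs) (hud : Differentiable ℝ u)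
    (hld : Differentiable ℝ lam) (hmd : Differentiable ℝ mus)
    (hcpos : ∀ t, 0 < c t) (hkpos : ∀ t, 0 < k t) (hhpos : ∀ t, 0 < hs t)
    (hupos : ∀ t, 0 < u t) (hlpos : ∀ t, 0 < lam t) (hmpos : ∀ t, 0 < mus t)
    (T1 : ∀ t, lam t = c t ^ (-σ))
    (T2 : ∀ t, (hs t * u t / k t) ^ β = γ * (1 - β) / δs * (lam t / mus t))
    (T3 : ∀ t, deriv k t = γ * k t ^ β * (u t * hs t) ^ (1 - β) - pi * k t - c t)
    (T4 : ∀ t, deriv hs t = δs * (1 - u t) * hs t)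
    (T5 : ∀ t, deriv lam t
      = -(lam t) * (β * γ) * (hs t * u t / k t) ^ (1 - β) + lam t * (ρ + pi))
    (T6 : ∀ t, deriv mus t = mus t * (ρ - δs)) :
    ∀ t, deriv u t / u t = (δs + pi) * (1 - β) / β - c t / k t + δs * u t := by
  intro t
  -- abbreviations
  have hk := hkpos t
  have hh := hhpos t
  have hu := hupos t
  have hl := hlpos t
  have hm := hmpos t
  have hC : 0 < γ * (1 - β) / δs := by
    apply div_pos (mul_pos hγ (by linarith)) hδs
  -- log-derivative lemmas
  have Hh : HasDerivAt (fun s => Real.log (hs s)) (deriv hs t / hs t) t :=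
    ((hhd t).hasDerivAt).log hh.ne'
  have Hu : HasDerivAt (fun s => Real.log (u s)) (deriv u t / u t) t :=
    ((hud t).hasDerivAt).log hu.ne'
  have Hk : HasDerivAt (fun s => Real.log (k s)) (deriv k t / k t) t :=
    ((hkd t).hasDerivAt).log hk.ne'
  have Hl : HasDerivAt (fun s => Real.log (lam s)) (deriv lam t / lam t) t :=
    ((hld t).hasDerivAt).log hl.ne'
  have Hm : HasDerivAt (fun s => Real.log (mus s)) (deriv mus t / mus t) t :=
    ((hmd t).hasDerivAt).log hm.ne'
  have HF : HasDerivAt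
      (fun s => β * (Real.log (hs s) + Real.log (u s) - Real.log (k s)))
      (β * (deriv hs t / hs t + deriv u t / u t - deriv k t / k t)) t :=
    ((Hh.add Hu).sub Hk).const_mul β
  have HG : HasDerivAt
      (fun s => Real.log (γ * (1 - β) / δs) + Real.log (lam s) - Real.log (mus s))
      (deriv lam t / lam t - deriv mus t / mus t) t := by
    exact ((Hl.const_add (Real.log (γ * (1 - β) / δs))).sub Hm)
  -- the two functions are equal
  have hfun : (fun s => β * (Real.log (hs s) + Real.log (u s) - Real.log (k s)))
      = (fun s => Real.log (γ * (1 - β) / δs) + Real.log (lam s) - Real.log (mus s)) := by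
    funext s
    have hpos : 0 < hs s * u s / k s :=
      div_pos (mul_pos (hhpos s) (hupos s)) (hkpos s)
    have := congrArg Real.log (T2 s)
    rw [Real.log_rpow hpos, Real.log_mul hC.ne' (div_pos (hlpos s) (hmpos s)).ne',
      Real.log_div (mul_pos (hhpos s) (hupos s)).ne' (hkpos s).ne',
      Real.log_mul (hhpos s).ne' (hupos s).ne',
      Real.log_div (hlpos s).ne' (hmpos s).ne'] at this
    linarith [this]
  rw [hfun] at HF
  have E : β * (deriv hs t / hs t + deriv u t / u t - deriv k t / k t)
      = deriv lam t / lam t - deriv mus t / mus t := HF.unique HG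
  -- rpow identity
  have hk1 : k t ^ β * k t ^ (1 - β) = k t := by
    rw [← Real.rpow_add hk]; norm_num
  have hk1b : (0:ℝ) < k t ^ (1 - β) := Real.rpow_pos_of_pos hk _
  have hAB : k t ^ β * (u t * hs t) ^ (1 - β) = (hs t * u t / k t) ^ (1 - β) * k t := by
    rw [mul_comm (u t) (hs t),
      Real.div_rpow (mul_pos hh hu).le hk.le]
    field_simp
    linear_combination hk1
  rw [T3 t, T4 t, T5 t, T6 t] at E
  have hβ : β ≠ 0 := hβ0.ne'
  field_simp at E
  have hcomm : u t * hs t / k t = hs t * u t / k t := by ring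
  rw [hcomm] at E
  have E2 : β * ((δs * (1 - u t) * u t + deriv u t) * k t
        - u t * (γ * k t ^ β * (u t * hs t) ^ (1 - β) - pi * k t - c t))
      = (-(β * γ) * (hs t * u t / k t) ^ (1 - β) + (pi + δs)) * (u t * k t) := by
    apply mul_right_cancel₀ hl.ne'
    linear_combination lam t * E
  field_simp at E2 ⊢
  rw [hcomm] at E2
  linear_combination E2 + β * γ * u t * hAB
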